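/- arXiv:1307.5471 — 4 statements merged into one kernel-verified Lean document; each statement's English description precedes it below -/
import Mathlib

section
/- Let Γ be a group acting on an abelian group M by group automorphisms, let A be a finite subset of M, and define φ(F) = rank(⟨F⁻¹A⟩) for finite subsets F of Γ, where ⟨S⟩ denotes the subgroup generated by S and F⁻¹A = {s⁻¹a : s ∈ F, a ∈ A}. Then φ(F₁ ∪ F₂) + φ(F₁ ∩ F₂) ≤ φ(F₁) + φ(F₂) for all finite subsets F₁, F₂ of Γ (with φ(∅) = 0). -/
open TensorProduct

instance : Module.Flat ℤ ℚ := IsLocalization.flat ℚ (nonZeroDivisors ℤ)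

/-- The subtype of an `AddSubgroup` is `ℤ`-linearly equivalent to the subtype of the
corresponding `ℤ`-submodule `span ℤ s` when the subgroup is `closure s`. -/
noncomputable def closureEquivSpan {M : Type*} [AddCommGroup M] (s : Set M) :
    (AddSubgroup.closure s) ≃ₗ[ℤ] (Submodule.span ℤ s) :=
  AddEquiv.toIntLinearEquiv
    { toFun := fun x => ⟨(x : M), by
        have h : (AddSubgroup.closure s : Set M) ⊆ (Submodule.span ℤ s : Set M) := by
          rw [← Submodule.span_int_eq_addSubgroupClosure]; rfl
        exact h x.2⟩
      invFun := fun x => ⟨(x : M), by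
        rw [← Submodule.span_int_eq_addSubgroupClosure]
        exact (Submodule.mem_toAddSubgroup _).mpr x.2⟩
      left_inv := fun x => rfl
      right_inv := fun x => rfl
      map_add' := fun x y => rfl }

lemma range_baseChange_subtype {M : Type*} [AddCommGroup M] (p : Submodule ℤ M) :
    LinearMap.range (p.subtype.baseChange ℚ) = p.baseChange ℚ := by
  apply le_antisymm
  · rintro x ⟨y, rfl⟩
    induction y using TensorProduct.induction_on with
    | zero => simp
    | tmul q m =>
      rw [LinearMap.baseChange_tmul]
      exact Submodule.tmul_mem_baseChange_of_mem q m.2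
    | add a b ha hb => rw [map_add]; exact Submodule.add_mem _ ha hb
  · rw [Submodule.baseChange]

lemma rank_tensor_eq_rank_baseChange {M : Type*} [AddCommGroup M] (p : Submodule ℤ M) :
    Module.rank ℚ (ℚ ⊗[ℤ] p) = Module.rank ℚ (p.baseChange ℚ) := by
  have hinj : Function.Injective (p.subtype.baseChange ℚ) := by
    have h : ⇑(p.subtype.baseChange ℚ) = ⇑(p.subtype.lTensor ℚ) :=
      LinearMap.baseChange_eq_ltensor p.subtype
    rw [h]
    exact Module.Flat.lTensor_preserves_injective_linearMap p.subtype p.injective_subtype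
  rw [← range_baseChange_subtype]
  exact (LinearEquiv.ofInjective _ hinj).rank_eq

/-- Rank of `ℚ ⊗ closure s` equals rank of the `ℚ`-span of the image of `s` in `ℚ ⊗ M`. -/
lemma rank_tensor_closure {M : Type*} [AddCommGroup M] (s : Set M) :
    Module.rank ℚ (ℚ ⊗[ℤ] (AddSubgroup.closure s)) =
      Module.rank ℚ (Submodule.span ℚ (TensorProduct.mk ℤ ℚ M 1 '' s)) := by
  rw [(LinearEquiv.baseChange ℤ ℚ _ _ (closureEquivSpan s)).rank_eq, rank_tensor_eq_rank_baseChange,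
    Submodule.baseChange_span]

/-- For a group `Γ` acting on an abelian group `M` by automorphisms, a finite `A ⊆ M`,
and `φ(F) = rank⟨F⁻¹A⟩`, one has `φ(F₁ ∪ F₂) + φ(F₁ ∩ F₂) ≤ φ(F₁) + φ(F₂)`. -/
theorem rank_union_add_rank_inter_le {Γ M : Type*} [Group Γ] [DecidableEq Γ]
    [AddCommGroup M] [DistribMulAction Γ M] (A : Finset M) (F₁ F₂ : Finset Γ) :
    Module.rank ℚ (ℚ ⊗[ℤ] (AddSubgroup.closure
        {x : M | ∃ s ∈ F₁ ∪ F₂, ∃ a ∈ A, x = s⁻¹ • a}))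
      + Module.rank ℚ (ℚ ⊗[ℤ] (AddSubgroup.closure
        {x : M | ∃ s ∈ F₁ ∩ F₂, ∃ a ∈ A, x = s⁻¹ • a}))
    ≤ Module.rank ℚ (ℚ ⊗[ℤ] (AddSubgroup.closure
        {x : M | ∃ s ∈ F₁, ∃ a ∈ A, x = s⁻¹ • a}))
      + Module.rank ℚ (ℚ ⊗[ℤ] (AddSubgroup.closure
        {x : M | ∃ s ∈ F₂, ∃ a ∈ A, x = s⁻¹ • a})) := by
  set f := TensorProduct.mk ℤ ℚ M 1 with hf
  set s₁ : Set M := {x : M | ∃ s ∈ F₁, ∃ a ∈ A, x = s⁻¹ • a} with hs₁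
  set s₂ : Set M := {x : M | ∃ s ∈ F₂, ∃ a ∈ A, x = s⁻¹ • a} with hs₂
  rw [rank_tensor_closure, rank_tensor_closure, rank_tensor_closure, rank_tensor_closure]
  have hU : {x : M | ∃ s ∈ F₁ ∪ F₂, ∃ a ∈ A, x = s⁻¹ • a} = s₁ ∪ s₂ := by
    ext x
    simp only [hs₁, hs₂, Set.mem_setOf_eq, Set.mem_union, Finset.mem_union]
    constructor
    · rintro ⟨s, hs | hs, a, ha, rfl⟩
      · exact Or.inl ⟨s, hs, a, ha, rfl⟩
      · exact Or.inr ⟨s, hs, a, ha, rfl⟩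
    · rintro (⟨s, hs, a, ha, rfl⟩ | ⟨s, hs, a, ha, rfl⟩)
      · exact ⟨s, Or.inl hs, a, ha, rfl⟩
      · exact ⟨s, Or.inr hs, a, ha, rfl⟩
  have hI : {x : M | ∃ s ∈ F₁ ∩ F₂, ∃ a ∈ A, x = s⁻¹ • a} ⊆ s₁ ∩ s₂ := by
    rintro x ⟨s, hs, a, ha, rfl⟩
    rw [Finset.mem_inter] at hs
    exact ⟨⟨s, hs.1, a, ha, rfl⟩, ⟨s, hs.2, a, ha, rfl⟩⟩
  rw [hU, Set.image_union, Submodule.span_union]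
  set p₁ := Submodule.span ℚ (f '' s₁)
  set p₂ := Submodule.span ℚ (f '' s₂)
  have h2 : Module.rank ℚ
      (Submodule.span ℚ (f '' {x : M | ∃ s ∈ F₁ ∩ F₂, ∃ a ∈ A, x = s⁻¹ • a}))
      ≤ Module.rank ℚ (p₁ ⊓ p₂ : Submodule ℚ (ℚ ⊗[ℤ] M)) := by
    apply Submodule.rank_mono
    rw [Submodule.span_le]
    rintro x ⟨m, hm, rfl⟩
    exact ⟨Submodule.subset_span ⟨m, (hI hm).1, rfl⟩,
      Submodule.subset_span ⟨m, (hI hm).2, rfl⟩⟩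
  calc Module.rank ℚ (p₁ ⊔ p₂ : Submodule ℚ (ℚ ⊗[ℤ] M)) +
        Module.rank ℚ
          (Submodule.span ℚ (f '' {x : M | ∃ s ∈ F₁ ∩ F₂, ∃ a ∈ A, x = s⁻¹ • a}))
      ≤ Module.rank ℚ (p₁ ⊔ p₂ : Submodule ℚ (ℚ ⊗[ℤ] M)) +
        Module.rank ℚ (p₁ ⊓ p₂ : Submodule ℚ (ℚ ⊗[ℤ] M)) := by
        exact add_le_add_right h2 _
    _ = Module.rank ℚ p₁ + Module.rank ℚ p₂ := Submodule.rank_sup_add_rank_inf_eq p₁ p₂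
end

section
/- Let 0 → M₁ → M₂ → M₃ → 0 be a short exact sequence of modules over the integral group ring ℤΓ of a group Γ, with π : M₂ → M₃ the surjection. Let A₁ be a finite subset of M₁ (viewed inside M₂), A₃' a finite subset of M₂, A₃ = π(A₃'), and A₂ = A₁ ∪ A₃'. Then for every finite subset F of Γ, rank(⟨F⁻¹A₂⟩) ≥ rank(⟨F⁻¹A₁⟩) + rank(⟨F⁻¹A₃⟩), where ⟨S⟩ denotes the subgroup generated by S and rank is the torsion-free rank of an abelian group. -/
open TensorProduct

/-- For a short exact sequence `0 → M₁ → M₂ → M₃ → 0` of `ℤΓ`-modules, with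
`A₁ ⊆ M₁` finite, `A₃' ⊆ M₂` finite, `A₃ = π(A₃')`, `A₂ = A₁ ∪ A₃'`, and any finite
`F ⊆ Γ`, one has `rank⟨F⁻¹A₂⟩ ≥ rank⟨F⁻¹A₁⟩ + rank⟨F⁻¹A₃⟩`. -/
theorem rank_ge_of_shortExact {Γ : Type*} [Group Γ] {M₁ M₂ M₃ : Type u}
    [AddCommGroup M₁] [AddCommGroup M₂] [AddCommGroup M₃]
    [Module (MonoidAlgebra ℤ Γ) M₁] [Module (MonoidAlgebra ℤ Γ) M₂]
    [Module (MonoidAlgebra ℤ Γ) M₃] [DecidableEq M₂] [DecidableEq M₃]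
    (ι : M₁ →ₗ[MonoidAlgebra ℤ Γ] M₂) (π : M₂ →ₗ[MonoidAlgebra ℤ Γ] M₃)
    (hι : Function.Injective ι) (hπ : Function.Surjective π)
    (hexact : LinearMap.range ι = LinearMap.ker π)
    (A₁ : Finset M₁) (A₃' : Finset M₂) (F : Finset Γ) :
    Module.rank ℚ (ℚ ⊗[ℤ] (AddSubgroup.closure
        {x : M₂ | ∃ s ∈ F, ∃ a ∈ A₁.image ι ∪ A₃',
          x = (MonoidAlgebra.single s⁻¹ (1 : ℤ)) • a}))
    ≥ Module.rank ℚ (ℚ ⊗[ℤ] (AddSubgroup.closure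
        {x : M₁ | ∃ s ∈ F, ∃ a ∈ A₁, x = (MonoidAlgebra.single s⁻¹ (1 : ℤ)) • a}))
      + Module.rank ℚ (ℚ ⊗[ℤ] (AddSubgroup.closure
        {x : M₃ | ∃ s ∈ F, ∃ a ∈ A₃'.image π,
          x = (MonoidAlgebra.single s⁻¹ (1 : ℤ)) • a})) := by
  classical
  have hflat : Module.Flat ℤ ℚ := IsLocalization.flat ℚ (nonZeroDivisors ℤ)
  set S₂ : Set M₂ := {x : M₂ | ∃ s ∈ F, ∃ a ∈ A₁.image ι ∪ A₃',
          x = (MonoidAlgebra.single s⁻¹ (1 : ℤ)) • a} with hS₂def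
  set S₁ : Set M₁ := {x : M₁ | ∃ s ∈ F, ∃ a ∈ A₁,
          x = (MonoidAlgebra.single s⁻¹ (1 : ℤ)) • a} with hS₁def
  set S₃ : Set M₃ := {x : M₃ | ∃ s ∈ F, ∃ a ∈ A₃'.image π,
          x = (MonoidAlgebra.single s⁻¹ (1 : ℤ)) • a} with hS₃def
  set G₁ := AddSubgroup.closure S₁ with hG₁def
  set G₂ := AddSubgroup.closure S₂ with hG₂def
  set G₃ := AddSubgroup.closure S₃ with hG₃def
  -- ι maps G₁ into G₂
  have hιS : ∀ x ∈ G₁, ι x ∈ G₂ := by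
    intro x hx
    have h1 : AddSubgroup.map ι.toAddMonoidHom G₁ ≤ G₂ := by
      rw [hG₁def, AddMonoidHom.map_closure]
      apply (AddSubgroup.closure_le _).2
      rintro y ⟨x, hx, rfl⟩
      obtain ⟨s, hs, a, ha, rfl⟩ := hx
      apply AddSubgroup.subset_closure
      refine ⟨s, hs, ι a, ?_, ?_⟩
      · exact Finset.mem_union_left _ (Finset.mem_image_of_mem _ ha)
      · simp [map_smul]
    exact h1 ⟨x, hx, rfl⟩
  -- π maps G₂ onto G₃
  have hmap : AddSubgroup.map π.toAddMonoidHom G₂ = G₃ := by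
    rw [hG₂def, AddMonoidHom.map_closure]
    apply le_antisymm
    · apply (AddSubgroup.closure_le _).2
      rintro y ⟨x, hx, rfl⟩
      obtain ⟨s, hs, a, ha, rfl⟩ := hx
      rcases Finset.mem_union.1 ha with h | h
      · obtain ⟨a₁, ha₁, rfl⟩ := Finset.mem_image.1 h
        have : π (ι a₁) = 0 := by
          have : ι a₁ ∈ LinearMap.ker π := hexact ▸ LinearMap.mem_range_self ι a₁
          exact this
        have : π ((MonoidAlgebra.single s⁻¹ (1 : ℤ)) • ι a₁) = 0 := by
          rw [map_smul, this, smul_zero]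
        simp only [LinearMap.toAddMonoidHom_coe, this]
        exact zero_mem G₃
      · apply AddSubgroup.subset_closure
        refine ⟨s, hs, π a, Finset.mem_image_of_mem _ h, ?_⟩
        simp [map_smul]
    · apply (AddSubgroup.closure_le _).2
      rintro y hy
      obtain ⟨s, hs, b, hb, rfl⟩ := hy
      obtain ⟨a, ha, rfl⟩ := Finset.mem_image.1 hb
      apply AddSubgroup.subset_closure
      refine ⟨(MonoidAlgebra.single s⁻¹ (1 : ℤ)) • a, ?_, ?_⟩
      · exact ⟨s, hs, a, Finset.mem_union_right _ ha, rfl⟩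
      · simp [map_smul]
  have hπS : ∀ x ∈ G₂, π x ∈ G₃ := by
    intro x hx
    exact hmap ▸ ⟨x, hx, rfl⟩
  -- the restricted maps
  set ψ : G₁ →ₗ[ℤ] G₂ :=
    (AddMonoidHom.codRestrict ((ι.toAddMonoidHom).comp G₁.subtype) G₂
      (fun x => hιS x x.2)).toIntLinearMap with hψdef
  set φ : G₂ →ₗ[ℤ] G₃ :=
    (AddMonoidHom.codRestrict ((π.toAddMonoidHom).comp G₂.subtype) G₃
      (fun x => hπS x x.2)).toIntLinearMap with hφdef
  have hψinj : Function.Injective ψ := by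
    intro x y hxy
    have : ι x = ι y := congrArg Subtype.val hxy
    exact Subtype.ext (hι this)
  have hφsurj : Function.Surjective φ := by
    rintro ⟨y, hy⟩
    rw [← hmap] at hy
    obtain ⟨x, hx, rfl⟩ := hy
    exact ⟨⟨x, hx⟩, rfl⟩
  have hcomp0 : ∀ x : G₁, φ (ψ x) = 0 := by
    intro x
    apply Subtype.ext
    have hx : ι (x : M₁) ∈ LinearMap.ker π := hexact ▸ LinearMap.mem_range_self ι (x : M₁)
    exact hx
  have hcomp : φ.comp ψ = 0 := LinearMap.ext fun x => hcomp0 x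
  -- base change to ℚ
  set Ψ := ψ.baseChange ℚ with hΨdef
  set Φ := φ.baseChange ℚ with hΦdef
  have hΨinj : Function.Injective Ψ := by
    rw [hΨdef, LinearMap.baseChange_eq_ltensor]
    exact Module.Flat.lTensor_preserves_injective_linearMap ψ hψinj
  have hΦsurj : Function.Surjective Φ := by
    rw [hΦdef, LinearMap.baseChange_eq_ltensor]
    exact LinearMap.lTensor_surjective ℚ hφsurj
  have hcomp' : Φ.comp Ψ = 0 := by
    rw [hΦdef, hΨdef, ← LinearMap.baseChange_comp, hcomp, LinearMap.baseChange_zero]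
  have hrange_le : LinearMap.range Ψ ≤ LinearMap.ker Φ := by
    rintro x ⟨y, rfl⟩
    have := LinearMap.ext_iff.1 hcomp' y
    simpa [LinearMap.mem_ker] using this
  -- rank computations
  have h2 : Module.rank ℚ (ℚ ⊗[ℤ] G₂)
      = Module.rank ℚ (ℚ ⊗[ℤ] G₃) + Module.rank ℚ (LinearMap.ker Φ) :=
    LinearMap.rank_eq_of_surjective hΦsurj
  have h1 : Module.rank ℚ (ℚ ⊗[ℤ] G₁) ≤ Module.rank ℚ (LinearMap.ker Φ) := by
    calc Module.rank ℚ (ℚ ⊗[ℤ] G₁) = Module.rank ℚ (LinearMap.range Ψ) :=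
          (rank_range_of_injective Ψ hΨinj).symm
      _ ≤ Module.rank ℚ (LinearMap.ker Φ) := Submodule.rank_mono hrange_le
  calc Module.rank ℚ (ℚ ⊗[ℤ] G₂)
      = Module.rank ℚ (ℚ ⊗[ℤ] G₃) + Module.rank ℚ (LinearMap.ker Φ) := h2
    _ ≥ Module.rank ℚ (ℚ ⊗[ℤ] G₃) + Module.rank ℚ (ℚ ⊗[ℤ] G₁) := add_le_add_right h1 _
    _ = Module.rank ℚ (ℚ ⊗[ℤ] G₁) + Module.rank ℚ (ℚ ⊗[ℤ] G₃) := add_comm _ _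
end

section
/- Let Γ be a group, f ∈ M_{m,n}(ℤΓ), and F a finite subset of Γ. Let A ⊆ (ℤΓ)^{1×n} be the set of rows of f, and for a finite set S ⊆ (ℤΓ)^{1×n} let ⟨S⟩ denote the subgroup it generates. Then there is a short exact sequence of abelian groups 0 → ker f* ∩ (ℤ[F])^{m×1} → (ℤ[F])^{m×1} → ⟨A*F⟩ → 0, and hence rank(⟨A*F⟩) = m|F| − rank(ker f* ∩ (ℤ[F])^{m×1}), where f* denotes the adjoint matrix (f*)_{k,j,s} = f_{j,k,s⁻¹} and A*F = {a*s : a ∈ A, s ∈ F}. -/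
open TensorProduct

/-- The involution `g ↦ g*` on `ℤΓ`, `(Σ g_s s)* = Σ g_s s⁻¹`. -/
noncomputable def MonoidAlgebra.star' {Γ : Type*} [Group Γ]
    (g : MonoidAlgebra ℤ Γ) : MonoidAlgebra ℤ Γ :=
  MonoidAlgebra.ofCoeff (Finsupp.mapDomain (fun s => s⁻¹) g.coeff)

/-- `(ℤ[F])^{m×1}`: the subgroup of `(ℤΓ)^{m×1}` of vectors supported in `F`. -/
noncomputable def suppIn {Γ : Type*} [Group Γ] [DecidableEq Γ] (m : ℕ) (F : Finset Γ) :
    AddSubgroup (Fin m → MonoidAlgebra ℤ Γ) where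
  carrier := {y | ∀ j, (y j).coeff.support ⊆ F}
  zero_mem' := by intro j; simp
  add_mem' := by
    intro a b ha hb j
    rw [show (a + b) j = a j + b j from rfl, MonoidAlgebra.coeff_add]
    exact (Finsupp.support_add).trans (Finset.union_subset (ha j) (hb j))
  neg_mem' := by
    intro a ha j
    rw [show (-a) j = -(a j) from rfl, MonoidAlgebra.coeff_neg, Finsupp.support_neg]
    exact ha j

/-- Multiplication by `f*` : `(ℤΓ)^{m×1} → (ℤΓ)^{n×1}`, `y ↦ f* y`. -/
noncomputable def adjMul {Γ : Type*} [Group Γ] {m n : ℕ}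
    (f : Matrix (Fin m) (Fin n) (MonoidAlgebra ℤ Γ)) :
    (Fin m → MonoidAlgebra ℤ Γ) →+ (Fin n → MonoidAlgebra ℤ Γ) :=
  AddMonoidHom.mk' (fun y k => ∑ j : Fin m, MonoidAlgebra.star' (f j k) * y j)
    (by
      intro a b
      funext k
      simp [mul_add, Finset.sum_add_distrib])

section Aux

variable {Γ : Type*} [Group Γ] [DecidableEq Γ] {m n : ℕ}
set_option linter.unusedSectionVars false

lemma adjMul_apply (f : Matrix (Fin m) (Fin n) (MonoidAlgebra ℤ Γ))
    (y : Fin m → MonoidAlgebra ℤ Γ) (k : Fin n) :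
    adjMul f y k = ∑ j : Fin m, MonoidAlgebra.star' (f j k) * y j := rfl

lemma adjMul_pi_single (f : Matrix (Fin m) (Fin n) (MonoidAlgebra ℤ Γ)) (j : Fin m)
    (g : MonoidAlgebra ℤ Γ) (k : Fin n) :
    adjMul f (Pi.single j g) k = MonoidAlgebra.star' (f j k) * g := by
  rw [adjMul_apply, Finset.sum_eq_single j]
  · simp
  · intro b _ hb
    simp [Pi.single_apply, hb]
  · simp

lemma map_eq_closure (f : Matrix (Fin m) (Fin n) (MonoidAlgebra ℤ Γ)) (F : Finset Γ) :
    AddSubgroup.map (adjMul f) (suppIn m F)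
        = AddSubgroup.closure
            {v : Fin n → MonoidAlgebra ℤ Γ | ∃ i : Fin m, ∃ s ∈ F,
              v = fun k => MonoidAlgebra.star' (f i k) * MonoidAlgebra.single s 1} := by
  apply le_antisymm
  · rintro x ⟨y, hy, rfl⟩
    have hrep : adjMul f y = ∑ j : Fin m, ∑ s ∈ (y j).coeff.support,
        (y j).coeff s • (fun k => MonoidAlgebra.star' (f j k) * MonoidAlgebra.single s 1) := by
      funext k
      simp only [Finset.sum_apply, Pi.smul_apply, adjMul_apply]
      refine Finset.sum_congr rfl fun j _ => ?_
      conv_lhs => rw [← MonoidAlgebra.sum_coeff_single (y j)]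
      rw [Finsupp.sum, Finset.mul_sum]
      refine Finset.sum_congr rfl fun s _ => ?_
      rw [← mul_smul_comm, MonoidAlgebra.smul_single, smul_eq_mul, mul_one]
    rw [hrep]
    refine sum_mem fun j _ => sum_mem fun s hs => zsmul_mem (AddSubgroup.subset_closure ?_) _
    exact ⟨j, s, hy j hs, rfl⟩
  · rw [AddSubgroup.closure_le]
    rintro v ⟨i, s, hs, rfl⟩
    refine ⟨Pi.single i (MonoidAlgebra.single s 1), ?_, ?_⟩
    · intro j
      rcases eq_or_ne j i with rfl | h
      · rw [Pi.single_eq_same]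
        intro t ht
        have := Finsupp.support_single_subset ht
        simp only [Finset.mem_singleton] at this
        subst this
        exact hs
      · rw [Pi.single_eq_of_ne h]
        simp
    · funext k
      rw [adjMul_pi_single]

end Aux

/-- There is a short exact sequence
`0 → ker f* ∩ (ℤ[F])^{m×1} → (ℤ[F])^{m×1} → ⟨A*F⟩ → 0` (i.e. `f*` maps `(ℤ[F])^{m×1}`
onto `⟨A*F⟩`, with kernel `ker f* ∩ (ℤ[F])^{m×1}`), and hence
`rank⟨A*F⟩ + rank(ker f* ∩ (ℤ[F])^{m×1}) = m|F|`, where `A` is the set of rows of `f`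
and `A*F = {a*s : a ∈ A, s ∈ F}`. -/
theorem rank_adjoint_image {Γ : Type*} [Group Γ] [DecidableEq Γ] {m n : ℕ}
    (f : Matrix (Fin m) (Fin n) (MonoidAlgebra ℤ Γ)) (F : Finset Γ) :
    AddSubgroup.map (adjMul f) (suppIn m F)
        = AddSubgroup.closure
            {v : Fin n → MonoidAlgebra ℤ Γ | ∃ i : Fin m, ∃ s ∈ F,
              v = fun k => MonoidAlgebra.star' (f i k) * MonoidAlgebra.single s 1} ∧
    Module.rank ℚ (ℚ ⊗[ℤ] (AddSubgroup.closure
            {v : Fin n → MonoidAlgebra ℤ Γ | ∃ i : Fin m, ∃ s ∈ F,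
              v = fun k => MonoidAlgebra.star' (f i k) * MonoidAlgebra.single s 1}))
        + Module.rank ℚ (ℚ ⊗[ℤ] ↥((adjMul f).ker ⊓ suppIn m F))
      = (m * F.card : ℕ) := by
  have h1 := map_eq_closure f F
  refine ⟨h1, ?_⟩
  rw [← h1]
  haveI : Module.Flat ℤ ℚ := IsLocalization.flat ℚ (nonZeroDivisors ℤ)
  set S := suppIn m F with hSdef
  set K := (adjMul f).ker ⊓ S with hKdef
  set I := AddSubgroup.map (adjMul f) S with hIdef
  -- the inclusion and the restricted map
  have hKS : K ≤ S := inf_le_right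
  let ι : ↥K →ₗ[ℤ] ↥S := (AddSubgroup.inclusion hKS).toIntLinearMap
  let π : ↥S →ₗ[ℤ] ↥I :=
    (AddMonoidHom.mk' (fun y : ↥S => (⟨adjMul f y.1, ⟨y.1, y.2, rfl⟩⟩ : ↥I))
      (fun a b => Subtype.ext (by simp [map_add]))).toIntLinearMap
  have hπ : Function.Surjective π := by
    rintro ⟨x, y, hy, rfl⟩
    exact ⟨⟨y, hy⟩, rfl⟩
  have hι : Function.Injective ι := AddSubgroup.inclusion_injective hKS
  have hex : Function.Exact ι π := by
    intro y
    constructor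
    · intro h0
      have h0' : adjMul f y.1 = 0 := congrArg Subtype.val h0
      exact ⟨⟨y.1, ⟨h0', y.2⟩⟩, rfl⟩
    · rintro ⟨z, rfl⟩
      exact Subtype.ext (AddMonoidHom.mem_ker.mp z.2.1)
  -- base change to ℚ
  let ι' : (ℚ ⊗[ℤ] ↥K) →ₗ[ℚ] (ℚ ⊗[ℤ] ↥S) := LinearMap.baseChange ℚ ι
  let π' : (ℚ ⊗[ℤ] ↥S) →ₗ[ℚ] (ℚ ⊗[ℤ] ↥I) := LinearMap.baseChange ℚ π
  have hπcoe : ⇑π' = ⇑(LinearMap.lTensor ℚ π) := LinearMap.baseChange_eq_ltensor π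
  have hιcoe : ⇑ι' = ⇑(LinearMap.lTensor ℚ ι) := LinearMap.baseChange_eq_ltensor ι
  have hπ' : Function.Surjective π' := by
    rw [hπcoe]; exact LinearMap.lTensor_surjective ℚ hπ
  have hι' : Function.Injective ι' := by
    rw [hιcoe]; exact Module.Flat.lTensor_preserves_injective_linearMap ι hι
  have hex' : Function.Exact ι' π' := by
    rw [show ⇑ι' = ⇑(LinearMap.lTensor ℚ ι) from hιcoe,
        show ⇑π' = ⇑(LinearMap.lTensor ℚ π) from hπcoe]
    exact Module.Flat.lTensor_exact ℚ hex
  -- rank of ℚ ⊗ S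
  let e1 : ↥S ≃ₗ[ℤ] (Fin m → ↥(Finsupp.supported ℤ ℤ (↑F : Set Γ))) :=
  { toFun := fun y j => ⟨(y.1 j).coeff, Finsupp.mem_supported ℤ _ |>.mpr
      (Finset.coe_subset.mpr (y.2 j))⟩
    map_add' := fun a b => rfl
    map_smul' := fun c a => rfl
    invFun := fun g => ⟨fun j => MonoidAlgebra.ofCoeff (g j).1, fun j =>
      Finset.coe_subset.mp ((Finsupp.mem_supported ℤ _).mp (g j).2)⟩
    left_inv := fun y => rfl
    right_inv := fun g => rfl }
  let e : ↥S ≃ₗ[ℤ] (Fin m → (↥(↑F : Set Γ) → ℤ)) :=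
    e1.trans (LinearEquiv.piCongrRight fun _ =>
      (Finsupp.supportedEquivFinsupp (↑F : Set Γ)).trans
        (Finsupp.linearEquivFunOnFinite ℤ ℤ ↥(↑F : Set Γ)))
  haveI : Module.Free ℤ ↥S := Module.Free.of_equiv e.symm
  have hrankS : Module.rank ℚ (ℚ ⊗[ℤ] ↥S) = ((m * F.card : ℕ) : Cardinal) := by
    rw [Module.rank_baseChange]
    have : Module.rank ℤ ↥S = ((m * F.card : ℕ) : Cardinal) := by
      rw [e.rank_eq, ((LinearEquiv.curry ℤ ℤ (Fin m) ↥(↑F : Set Γ)).symm).rank_eq,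
        rank_fun']
      simp [Fintype.card_coe]
    rw [this]
    simp
  -- conclude
  have hrank := LinearMap.rank_range_add_rank_ker π'
  rw [LinearMap.range_eq_top.mpr hπ', rank_top] at hrank
  rw [LinearMap.exact_iff.mp hex'] at hrank
  rw [← (LinearEquiv.ofInjective ι' hι').rank_eq] at hrank
  exact hrank.trans hrankS
end

section
/- Let B be a finite set, M an abelian group, and B ⊆ M a ℤ-linearly independent subset. Then for each λ ∈ [0, 1/2]^B there exists a group homomorphism ι_λ : M → ℝ/ℤ with ι_λ(b) = λ_b + ℤ for all b ∈ B, and the resulting map ι : [0,1/2]^B → Hom(M, ℝ/ℤ) (with the topology of pointwise convergence on the target) can be chosen to be a continuous injection, hence a topological embedding of the cube [0,1/2]^B into the Pontryagin dual of M. -/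
/-- For a `ℤ`-linearly independent finite subset `B` of an abelian group `M`, there is a
continuous injection `ι` of the cube `[0,1/2]^B` into `Hom(M, ℝ/ℤ)` (with the topology
of pointwise convergence, i.e. the topology of `(ℝ/ℤ)^M`) such that each `ι(λ)` is a
group homomorphism with `ι(λ)(b) = λ_b + ℤ` for all `b ∈ B`; being a continuous
injection from a compact space into a Hausdorff space, `ι` is a topological embedding
of the cube into the Pontryagin dual of `M`. -/
theorem cube_embeds_into_dual {M : Type*} [AddCommGroup M] (B : Finset M)
    (hB : LinearIndependent ℤ (fun b : B => (b : M))) :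
    ∃ ι : (B → Set.Icc (0 : ℝ) (1 / 2)) → (M → AddCircle (1 : ℝ)),
      (∀ lam, ∀ a b : M, ι lam (a + b) = ι lam a + ι lam b) ∧
      (∀ lam (b : B), ι lam (b : M) = ((lam b : ℝ) : AddCircle (1 : ℝ))) ∧
      Continuous ι ∧ Function.Injective ι ∧ Topology.IsEmbedding ι := by
  classical
  haveI : Fact ((0 : ℝ) < 1) := ⟨one_pos⟩
  set N : Submodule ℤ M := Submodule.span ℤ (Set.range (fun b : B => (b : M))) with hN
  let bas : Module.Basis B ℤ N := Module.Basis.span hB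
  -- extend the coordinate functionals (with values in ℚ, an injective ℤ-module) to all of M
  have hext : ∀ b : B, ∃ f : M →ₗ[ℤ] ℚ, ∀ x : N, f (x : M) = ((bas.coord b x : ℤ) : ℚ) := by
    intro b
    obtain ⟨h, hh⟩ := (Module.Baer.of_divisible ℚ).extension_property N.subtype
      N.injective_subtype ((Int.castRingHom ℚ).toIntLinearMap ∘ₗ bas.coord b)
    exact ⟨h, fun x => congrArg (fun g => g x) hh⟩
  choose f hf using hext
  -- the extended functionals are dual to `B`
  have hfb : ∀ b b' : B, f b (b' : M) = if b' = b then 1 else 0 := by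
    intro b b'
    have h2 : ((bas b' : N) : M) = (b' : M) := congrArg Subtype.val (Module.Basis.span_apply hB b')
    have h3 := hf b (bas b')
    rw [h2] at h3
    simpa [Module.Basis.coord_apply, Module.Basis.repr_self, Finsupp.single_apply] using h3
  -- key computation : evaluating the sum at an element of `B`
  have key : ∀ (nu : B → Set.Icc (0 : ℝ) (1 / 2)) (b : B),
      (∑ c : B, (nu c : ℝ) * ((f c (b : M) : ℚ) : ℝ)) = (nu b : ℝ) := by
    intro nu b
    rw [Finset.sum_eq_single b]
    · rw [hfb, if_pos rfl]; simp
    · intro c _ hc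
      rw [hfb, if_neg (fun h => hc h.symm)]; simp
    · simp
  -- additivity of the sum
  have addkey : ∀ (lam : B → Set.Icc (0 : ℝ) (1 / 2)) (a b : M),
      (∑ c : B, (lam c : ℝ) * ((f c (a + b) : ℚ) : ℝ))
        = (∑ c : B, (lam c : ℝ) * ((f c a : ℚ) : ℝ))
          + (∑ c : B, (lam c : ℝ) * ((f c b : ℚ) : ℝ)) := by
    intro lam a b
    rw [← Finset.sum_add_distrib]
    refine Finset.sum_congr rfl fun c _ => ?_
    rw [map_add]
    push_cast
    ring
  have cont : Continuous (fun (lam : B → Set.Icc (0 : ℝ) (1 / 2)) (a : M) =>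
      (((∑ b : B, (lam b : ℝ) * ((f b a : ℚ) : ℝ)) : ℝ) : AddCircle (1 : ℝ))) := by
    apply continuous_pi
    intro a
    exact (AddCircle.continuous_mk' 1).comp <| continuous_finset_sum _ fun b _ =>
      (continuous_subtype_val.comp (continuous_apply b)).mul continuous_const
  have inj : Function.Injective (fun (lam : B → Set.Icc (0 : ℝ) (1 / 2)) (a : M) =>
      (((∑ b : B, (lam b : ℝ) * ((f b a : ℚ) : ℝ)) : ℝ) : AddCircle (1 : ℝ))) := by
    intro lam mu h
    funext b
    have hb := congrFun h (b : M)
    dsimp only at hb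
    rw [key lam b, key mu b] at hb
    have hlam : (lam b : ℝ) ∈ Set.Ico (0 : ℝ) (0 + 1) :=
      ⟨(lam b).2.1, by have := (lam b).2.2; linarith⟩
    have hmu : (mu b : ℝ) ∈ Set.Ico (0 : ℝ) (0 + 1) :=
      ⟨(mu b).2.1, by have := (mu b).2.2; linarith⟩
    exact Subtype.ext ((AddCircle.coe_eq_coe_iff_of_mem_Ico hlam hmu).mp hb)
  refine ⟨fun lam a => (((∑ b : B, (lam b : ℝ) * ((f b a : ℚ) : ℝ)) : ℝ) : AddCircle (1 : ℝ)),
    ?_, ?_, cont, inj, (cont.isClosedEmbedding inj).isEmbedding⟩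
  · intro lam a b
    dsimp only
    rw [addkey, AddCircle.coe_add]
  · intro lam b
    dsimp only
    rw [key]
end
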